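/- Let q be an odd prime and let P, Q be integers. Then the resultant of x² − Px + Q and x^{q−1} − 1 equals 1 + Q^{q−1} − V_{q−1}(P, Q), where V_n(P, Q) is the n-th term of the Lucas sequence of the second kind with parameters P, Q. -/

import Mathlib

open Polynomial

/-- The Sylvester matrix of two integer polynomials `f` (of degree `n = f.natDegree`)
and `g` (of degree `m = g.natDegree`): an `(m + n) × (m + n)` matrix whose first `m`
rows are shifted copies of the coefficients of `f` (in decreasing order of degree)
and whose last `n` rows are shifted copies of the coefficients of `g`. -/
def sylvesterMatrix (f g : Polynomial ℤ) :
    Matrix (Fin (g.natDegree + f.natDegree)) (Fin (g.natDegree + f.natDegree)) ℤ :=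
  Matrix.of fun i j =>
    if (i : ℕ) < g.natDegree then
      if (i : ℕ) ≤ (j : ℕ) ∧ (j : ℕ) ≤ (i : ℕ) + f.natDegree then
        f.coeff (f.natDegree - ((j : ℕ) - (i : ℕ)))
      else 0
    else
      if (i : ℕ) - g.natDegree ≤ (j : ℕ) ∧ (j : ℕ) ≤ ((i : ℕ) - g.natDegree) + g.natDegree then
        g.coeff (g.natDegree - ((j : ℕ) - ((i : ℕ) - g.natDegree)))
      else 0

/-- The resultant `R(f, g)` of two integer polynomials, i.e. the determinant of their
Sylvester matrix. -/
def resultant (f g : Polynomial ℤ) : ℤ :=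
  (sylvesterMatrix f g).det

/-- The Lucas sequence of the second kind `V_n(P, Q)`:
`V_0 = 2`, `V_1 = P`, `V_i = P * V_{i-1} - Q * V_{i-2}`. -/
def lucasV (P Q : ℤ) : ℕ → ℤ
  | 0 => 2
  | 1 => P
  | n + 2 => P * lucasV P Q (n + 1) - Q * lucasV P Q n

/-- Auxiliary sequence: `sv m = U_{m+1}(P,Q)` (shifted Lucas sequence of the first kind). -/
def sv (P Q : ℤ) : ℕ → ℤ
  | 0 => 1
  | 1 => P
  | n + 2 => P * sv P Q (n + 1) - Q * sv P Q n

lemma sv_sq (P Q : ℤ) : ∀ m, sv P Q (m+1) * sv P Q (m+1) - sv P Q (m+2) * sv P Q m = Q^(m+1)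
  | 0 => by simp only [sv]; ring
  | m + 1 => by
    have h := sv_sq P Q m
    simp only [sv] at *
    linear_combination Q * h

lemma lucasV_eq_sv (P Q : ℤ) : ∀ m, lucasV P Q (m+2) = sv P Q (m+2) - Q * sv P Q m
  | 0 => by simp only [lucasV, sv]; ring
  | 1 => by simp only [lucasV, sv]; ring
  | m + 2 => by
    have h1 := lucasV_eq_sv P Q m
    have h2 := lucasV_eq_sv P Q (m+1)
    have d1 : lucasV P Q (m+4) = P * lucasV P Q (m+3) - Q * lucasV P Q (m+2) := rfl
    have d2 : sv P Q (m+4) = P * sv P Q (m+3) - Q * sv P Q (m+2) := rfl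
    have d3 : sv P Q (m+2) = P * sv P Q (m+1) - Q * sv P Q m := rfl
    show lucasV P Q (m+4) = sv P Q (m+4) - Q * sv P Q (m+2)
    linear_combination d1 + P*h2 - Q*h1 - d2 + Q*d3

/-- Explicit form of the Sylvester matrix entries in our situation. -/
def Mf (P Q : ℤ) (n i j : ℕ) : ℤ :=
  if i < n then
    (if j = i then 1 else if j = i + 1 then -P else if j = i + 2 then Q else 0)
  else
    (if j = i - n then 1 else if j = i then -1 else 0)

/-- Upper triangular matrix used for column reduction. -/
def Uf (P Q : ℤ) (j k : ℕ) : ℤ := if j ≤ k then sv P Q (k - j) else 0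

lemma comb (P Q : ℤ) (i k : ℕ) :
    Uf P Q i k + (-P) * Uf P Q (i+1) k + Q * Uf P Q (i+2) k = if k = i then 1 else 0 := by
  rcases Nat.lt_or_ge k i with h | h
  · rw [if_neg (by omega)]
    simp only [Uf, if_neg (by omega : ¬ i ≤ k), if_neg (by omega : ¬ i+1 ≤ k),
      if_neg (by omega : ¬ i+2 ≤ k)]
    ring
  · obtain ⟨d, rfl⟩ := Nat.exists_eq_add_of_le h
    match d with
    | 0 => simp [Uf, sv]
    | 1 =>
      rw [if_neg (by omega)]
      simp only [Uf, if_pos (by omega : i ≤ i + 1), if_pos (by omega : i+1 ≤ i+1),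
        if_neg (by omega : ¬ i+2 ≤ i+1), show i + 1 - i = 1 by omega,
        show i + 1 - (i+1) = 0 by omega]
      simp only [sv]; ring
    | e + 2 =>
      rw [if_neg (by omega)]
      simp only [Uf, if_pos (by omega : i ≤ i + (e+2)), if_pos (by omega : i+1 ≤ i+(e+2)),
        if_pos (by omega : i+2 ≤ i+(e+2)), show i + (e+2) - i = e + 2 by omega,
        show i + (e+2) - (i+1) = e + 1 by omega, show i + (e+2) - (i+2) = e by omega]
      simp only [sv]; ring

lemma sum_row_lt (P Q : ℤ) (n i k : ℕ) (hi : i < n) :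
    ∑ j ∈ Finset.range (n+2), Mf P Q n i j * Uf P Q j k = if k = i then 1 else 0 := by
  have hsplit : ∀ j, Mf P Q n i j * Uf P Q j k =
      (if j = i then Uf P Q i k else 0) + ((if j = i+1 then (-P) * Uf P Q (i+1) k else 0)
        + (if j = i+2 then Q * Uf P Q (i+2) k else 0)) := by
    intro j
    simp only [Mf, if_pos hi]
    by_cases h1 : j = i
    · simp [h1, show i ≠ i + 1 by omega, show i ≠ i + 2 by omega]
    · by_cases h2 : j = i + 1
      · simp [h2, show ¬ (i + 1 = i) by omega, show i + 1 ≠ i + 2 by omega]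
      · by_cases h3 : j = i + 2
        · simp [h3, show ¬ (i + 2 = i) by omega, show ¬ (i + 2 = i + 1) by omega]
        · simp [h1, h2, h3]
  rw [Finset.sum_congr rfl fun j _ => hsplit j]
  rw [Finset.sum_add_distrib, Finset.sum_add_distrib]
  rw [Finset.sum_ite_eq' _ i, Finset.sum_ite_eq' _ (i+1), Finset.sum_ite_eq' _ (i+2)]
  rw [if_pos (Finset.mem_range.2 (by omega)), if_pos (Finset.mem_range.2 (by omega)),
    if_pos (Finset.mem_range.2 (by omega))]
  rw [← add_assoc]
  exact comb P Q i k

lemma sum_row_ge (P Q : ℤ) (n i k : ℕ) (hn : 1 ≤ n) (hi : n ≤ i) (hin : i < n + 2) :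
    ∑ j ∈ Finset.range (n+2), Mf P Q n i j * Uf P Q j k
      = Uf P Q (i - n) k - Uf P Q i k := by
  have hsplit : ∀ j, Mf P Q n i j * Uf P Q j k =
      (if j = i - n then Uf P Q (i-n) k else 0) + (if j = i then -Uf P Q i k else 0) := by
    intro j
    simp only [Mf, if_neg (by omega : ¬ i < n)]
    by_cases h1 : j = i - n
    · simp [h1, show ¬ (i - n = i) by omega]
    · by_cases h2 : j = i
      · simp [h2, show ¬ (i = i - n) by omega]
      · simp [h1, h2]
  rw [Finset.sum_congr rfl fun j _ => hsplit j]
  rw [Finset.sum_add_distrib, Finset.sum_ite_eq' _ (i-n), Finset.sum_ite_eq' _ i]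
  rw [if_pos (Finset.mem_range.2 (by omega)), if_pos (Finset.mem_range.2 (by omega))]
  ring

lemma key (P Q : ℤ) (n : ℕ) (hn : 2 ≤ n) :
    _root_.resultant (X ^ 2 - C P * X + C Q) (X ^ n - 1) = 1 + Q ^ n - lucasV P Q n := by
  set f : Polynomial ℤ := X ^ 2 - C P * X + C Q with hf
  set g : Polynomial ℤ := X ^ n - 1 with hgdef
  have hdf : f.natDegree = 2 := by rw [hf]; compute_degree!
  have hdg : g.natDegree = n := by
    rw [hgdef, show (1 : Polynomial ℤ) = C 1 from rfl, natDegree_X_pow_sub_C]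
  have hf2 : f.coeff 2 = 1 := by
    simp only [hf, coeff_add, coeff_sub, coeff_X_pow, coeff_C_mul, coeff_X, coeff_C]
    norm_num
  have hf1 : f.coeff 1 = -P := by
    simp only [hf, coeff_add, coeff_sub, coeff_X_pow, coeff_C_mul, coeff_X, coeff_C]
    norm_num
  have hf0 : f.coeff 0 = Q := by
    simp only [hf, coeff_add, coeff_sub, coeff_X_pow, coeff_C_mul, coeff_X, coeff_C]
    norm_num
  have hg : ∀ k, g.coeff k = (if k = n then 1 else 0) - (if k = 0 then 1 else 0) := by
    intro k
    simp only [hgdef, coeff_sub, coeff_X_pow, coeff_one]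
  have hM : ∀ i j : Fin (g.natDegree + f.natDegree),
      sylvesterMatrix f g i j = Mf P Q n i j := by
    intro i j
    simp only [sylvesterMatrix, Matrix.of_apply, hdf, hdg, Mf]
    by_cases h : (i : ℕ) < n
    · rw [if_pos h, if_pos h]
      by_cases hc : (i : ℕ) ≤ (j : ℕ) ∧ (j : ℕ) ≤ (i : ℕ) + 2
      · rw [if_pos hc]
        obtain ⟨d, hd⟩ : ∃ d, (j : ℕ) = (i : ℕ) + d := ⟨(j : ℕ) - i, by omega⟩
        have hd2 : d ≤ 2 := by omega
        interval_cases d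
        · rw [hd]; simp [hf2]
        · rw [hd]
          rw [show (i : ℕ) + 1 - (i : ℕ) = 1 by omega, hf1,
            if_neg (by omega : ¬ (i : ℕ) + 1 = (i : ℕ)), if_pos rfl]
        · rw [hd]
          rw [show (i : ℕ) + 2 - (i : ℕ) = 2 by omega]
          rw [if_neg (by omega : ¬ (i : ℕ) + 2 = (i : ℕ)),
            if_neg (by omega : ¬ (i : ℕ) + 2 = (i : ℕ) + 1), if_pos rfl]
          simpa using hf0
      · rw [if_neg hc]
        split_ifs <;> omega
    · rw [if_neg h, if_neg h]
      by_cases hc : (i : ℕ) - n ≤ (j : ℕ) ∧ (j : ℕ) ≤ (i : ℕ) - n + n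
      · rw [if_pos hc, hg]
        split_ifs <;> omega
      · rw [if_neg hc]
        split_ifs <;> omega
  have hsz : g.natDegree + f.natDegree = n + 2 := by rw [hdf, hdg]
  set MM : Matrix (Fin (n + 2)) (Fin (n + 2)) ℤ :=
    Matrix.of (fun i j => Mf P Q n i j) with hMMdef
  have hMM : MM = Matrix.reindex (finCongr hsz) (finCongr hsz) (sylvesterMatrix f g) := by
    ext i j
    rw [Matrix.reindex_apply, Matrix.submatrix_apply, hM]
    simp [hMMdef]
  have h1 : _root_.resultant f g = MM.det := by
    rw [_root_.resultant, hMM, Matrix.det_reindex_self]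
  set UU : Matrix (Fin (n + 2)) (Fin (n + 2)) ℤ :=
    Matrix.of (fun j k => Uf P Q j k) with hUUdef
  have hUdet : UU.det = 1 := by
    have htri : UU.BlockTriangular id := by
      intro i j hlt
      have h' : (j : ℕ) < (i : ℕ) := hlt
      simp only [hUUdef, Matrix.of_apply, Uf]
      rw [if_neg (by omega)]
    rw [Matrix.det_of_upperTriangular htri]
    have : ∀ i : Fin (n + 2), UU i i = 1 := by
      intro i; simp [hUUdef, Uf, sv]
    simp [this]
  have hprod : ∀ i k : Fin (n + 2), (MM * UU) i k =
      if (i : ℕ) < n then (if (k : ℕ) = (i : ℕ) then 1 else 0)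
      else Uf P Q ((i : ℕ) - n) k - Uf P Q (i : ℕ) k := by
    intro i k
    rw [Matrix.mul_apply]
    have hsum : ∑ j : Fin (n + 2), MM i j * UU j k
        = ∑ j ∈ Finset.range (n + 2), Mf P Q n i j * Uf P Q j k := by
      exact Fin.sum_univ_eq_sum_range (fun j => Mf P Q n i j * Uf P Q j k) (n + 2)
    rw [hsum]
    by_cases hi : (i : ℕ) < n
    · rw [if_pos hi, sum_row_lt P Q n i k hi]
    · rw [if_neg hi, sum_row_ge P Q n i k (by omega) (by omega) i.isLt]
  set Bm : Matrix (Fin 2) (Fin 2) ℤ :=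
    Matrix.of (fun a b => Uf P Q (a : ℕ) (n + (b : ℕ)) - Uf P Q (n + (a : ℕ)) (n + (b : ℕ)))
    with hBmdef
  set Cm : Matrix (Fin 2) (Fin n) ℤ :=
    Matrix.of (fun a b => Uf P Q (a : ℕ) (b : ℕ) - Uf P Q (n + (a : ℕ)) (b : ℕ)) with hCmdef
  have hre : Matrix.reindex finSumFinEquiv.symm finSumFinEquiv.symm (MM * UU)
      = Matrix.fromBlocks 1 0 Cm Bm := by
    ext i j
    rw [Matrix.reindex_apply, Matrix.submatrix_apply, Equiv.symm_symm]
    rcases i with i | i <;> rcases j with j | j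
    · rw [hprod]
      simp only [finSumFinEquiv_apply_left, Fin.coe_castAdd]
      simp only [i.isLt, ↓reduceIte]
      rw [Matrix.fromBlocks_apply₁₁, Matrix.one_apply]
      by_cases hij : i = j
      · subst hij; simp
      · rw [if_neg hij]
        simp only [show ¬ ((j : ℕ) = (i : ℕ)) by simpa [Fin.val_inj, eq_comm] using hij, ↓reduceIte]
    · rw [hprod]
      simp only [finSumFinEquiv_apply_left, finSumFinEquiv_apply_right, Fin.coe_castAdd,
        Fin.coe_natAdd]
      simp only [i.isLt, ↓reduceIte, show ¬ (n + (j : ℕ) = (i : ℕ)) by omega]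
      rw [Matrix.fromBlocks_apply₁₂]
      simp
    · rw [hprod]
      simp only [finSumFinEquiv_apply_left, finSumFinEquiv_apply_right, Fin.coe_castAdd,
        Fin.coe_natAdd]
      simp only [show ¬ (n + (i : ℕ) < n) by omega, ↓reduceIte]
      rw [Matrix.fromBlocks_apply₂₁]
      simp only [hCmdef, Matrix.of_apply]
      rw [show n + (i : ℕ) - n = (i : ℕ) by omega]
    · rw [hprod]
      simp only [finSumFinEquiv_apply_right, Fin.coe_natAdd]
      simp only [show ¬ (n + (i : ℕ) < n) by omega, ↓reduceIte]
      rw [Matrix.fromBlocks_apply₂₂]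
      simp only [hBmdef, Matrix.of_apply]
      rw [show n + (i : ℕ) - n = (i : ℕ) by omega]
  have h2 : MM.det = Bm.det := by
    have := Matrix.det_reindex_self
      ((finSumFinEquiv : Fin n ⊕ Fin 2 ≃ Fin (n + 2)).symm) (MM * UU)
    rw [hre] at this
    rw [show MM.det = (MM * UU).det by rw [Matrix.det_mul, hUdet, mul_one], ← this,
      Matrix.det_fromBlocks_zero₁₂, Matrix.det_one, one_mul]
  have hB : ∀ a b : Fin 2, Bm a b
      = Uf P Q (a : ℕ) (n + (b : ℕ)) - Uf P Q (n + (a : ℕ)) (n + (b : ℕ)) := fun a b => rfl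
  have hB00 : Bm 0 0 = sv P Q n - 1 := by
    rw [hB]
    simp only [Uf, Fin.val_zero, add_zero]
    rw [if_pos (by omega), if_pos (by omega), show n - 0 = n by omega, Nat.sub_self,
      show sv P Q 0 = 1 from rfl]
  have hB01 : Bm 0 1 = sv P Q (n + 1) - P := by
    rw [hB]
    simp only [Uf, Fin.val_zero, Fin.val_one]
    rw [if_pos (by omega), if_pos (by omega), show n + 1 - 0 = n + 1 by omega,
      show n + 0 + 1 - (n + 0) = 1 by omega, show sv P Q 1 = P from rfl]
  have hB10 : Bm 1 0 = sv P Q (n - 1) := by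
    rw [hB]
    simp only [Uf, Fin.val_zero, Fin.val_one, add_zero]
    rw [if_pos (by omega), if_neg (by omega), show n - 1 = n - 1 from rfl, sub_zero]
  have hB11 : Bm 1 1 = sv P Q n - 1 := by
    rw [hB]
    simp only [Uf, Fin.val_one]
    rw [if_pos (by omega), if_pos (by omega), show n + 1 - 1 = n by omega,
      Nat.sub_self, show sv P Q 0 = 1 from rfl]
  have h3 : Bm.det = (sv P Q n - 1) * (sv P Q n - 1) - (sv P Q (n + 1) - P) * sv P Q (n - 1) := by
    rw [Matrix.det_fin_two, hB00, hB01, hB10, hB11]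
  rw [h1, h2, h3]
  obtain ⟨m, rfl⟩ : ∃ m, n = m + 2 := ⟨n - 2, by omega⟩
  have d3 : sv P Q (m + 2) = P * sv P Q (m + 1) - Q * sv P Q m := rfl
  rw [show m + 2 - 1 = m + 1 by omega]
  linear_combination sv_sq P Q (m + 1) + lucasV_eq_sv P Q m - d3

/-- The resultant of `x² - Px + Q` and `x^{q-1} - 1` equals
`1 + Q^{q-1} - V_{q-1}(P, Q)`. -/
theorem resultant_eq_lucasV (q : ℕ) (hq : q.Prime) (hodd : Odd q) (P Q : ℤ) :
    _root_.resultant (X ^ 2 - C P * X + C Q) (X ^ (q - 1) - 1) =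
      1 + Q ^ (q - 1) - lucasV P Q (q - 1) := by
  have h2 := hq.two_le
  have hne : q ≠ 2 := by rintro rfl; exact Nat.not_odd_iff_even.mpr (by decide) hodd
  exact key P Q (q - 1) (by omega)
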